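/- Let SV be the twisted Schrödinger–Virasoro Lie algebra and let · be a bilinear product on SV of the form x·y = λ[x,y] + χ_Ω(x,y) for some λ ∈ ℂ and finitely supported Ω = (μ_k). If · is commutative (x·y = y·x for all x, y) and satisfies [x,y]·z = x·(y·z) - y·(x·z) for all x, y, z, then λ = 0 and μ_k = 0 for all k, so x·y = 0 identically. -/

import Mathlib

theorem stmt11
    (V : Type) [LieRing V] [LieAlgebra ℂ V]
    (L Y M : ℤ → V)
    (b : Module.Basis (Fin 3 × ℤ) ℂ V)
    (hbL : ∀ i : ℤ, b ((0 : Fin 3), i) = L i)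
    (hbY : ∀ i : ℤ, b ((1 : Fin 3), i) = Y i)
    (hbM : ∀ i : ℤ, b ((2 : Fin 3), i) = M i)
    (hLL : ∀ m n : ℤ, ⁅L m, L n⁆ = ((m : ℂ) - n) • L (m + n))
    (hLY : ∀ m n : ℤ, ⁅L m, Y n⁆ = ((m : ℂ) / 2 - n) • Y (m + n))
    (hLM : ∀ m n : ℤ, ⁅L m, M n⁆ = (-(n : ℂ)) • M (m + n))
    (hYY : ∀ m n : ℤ, ⁅Y m, Y n⁆ = ((m : ℂ) - n) • M (m + n))
    (hYM : ∀ m n : ℤ, ⁅Y m, M n⁆ = 0)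
    (hMM : ∀ m n : ℤ, ⁅M m, M n⁆ = 0)
    (lam : ℂ) (μ : ℤ →₀ ℂ)
    (χ : V →ₗ[ℂ] V →ₗ[ℂ] V)
    (hχLL : ∀ m n : ℤ, χ (L m) (L n) = μ.sum fun k c => c • M (m + n + k))
    (hχ0 : ∀ x y : V,
      (x ∈ Submodule.span ℂ (Set.range Y ∪ Set.range M) ∨
       y ∈ Submodule.span ℂ (Set.range Y ∪ Set.range M)) → χ x y = 0)
    (mul : V → V → V)
    (hmul : ∀ x y : V, mul x y = lam • ⁅x, y⁆ + χ x y)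
    (hcomm : ∀ x y : V, mul x y = mul y x)
    (hpost : ∀ x y z : V, mul ⁅x, y⁆ z = mul x (mul y z) - mul y (mul x z)) :
    lam = 0 ∧ (∀ k : ℤ, μ k = 0) ∧ (∀ x y : V, mul x y = 0) := by
  classical
  have hYS : ∀ n : ℤ, Y n ∈ Submodule.span ℂ (Set.range Y ∪ Set.range M) :=
    fun n => Submodule.subset_span (Or.inl ⟨n, rfl⟩)
  have hMS : ∀ n : ℤ, M n ∈ Submodule.span ℂ (Set.range Y ∪ Set.range M) :=
    fun n => Submodule.subset_span (Or.inr ⟨n, rfl⟩)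
  have hbYS : ∀ m : ℤ, b ((1 : Fin 3), m) ∈ Submodule.span ℂ (Set.range Y ∪ Set.range M) :=
    fun m => by rw [hbY]; exact hYS m
  have hbMS : ∀ m : ℤ, b ((2 : Fin 3), m) ∈ Submodule.span ℂ (Set.range Y ∪ Set.range M) :=
    fun m => by rw [hbM]; exact hMS m
  have hsumS : ∀ w : ℤ, (μ.sum fun k c => c • M (w + k)) ∈
      Submodule.span ℂ (Set.range Y ∪ Set.range M) :=
    fun w => Submodule.sum_mem _ fun k _ => Submodule.smul_mem _ _ (hMS _)
  -- λ = 0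
  have hL1 : L 1 ≠ 0 := by rw [← hbL]; exact b.ne_zero _
  have hlam : lam = 0 := by
    have h := hcomm (L 0) (L 1)
    rw [hmul, hmul, hLL, hLL, hχLL, hχLL] at h
    simp only [zero_add, add_zero] at h
    have h3 := add_right_cancel h
    rw [smul_smul, smul_smul] at h3
    have h4 : (lam * (((0 : ℤ) : ℂ) - ((1 : ℤ) : ℂ)) - lam * (((1 : ℤ) : ℂ) - ((0 : ℤ) : ℂ)))
        • L 1 = 0 := by rw [sub_smul, h3, sub_self]
    have h5 := (smul_eq_zero.mp h4).resolve_right hL1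
    push_cast at h5
    linear_combination -h5 / 2
  -- μ = 0
  have hχpost : ∀ x y z : V, χ ⁅x, y⁆ z = χ x (χ y z) - χ y (χ x z) := by
    intro x y z
    have h := hpost x y z
    simp only [hmul, hlam, zero_smul, zero_add] at h
    exact h
  have e1 : χ (L 0) (L 0) ∈ Submodule.span ℂ (Set.range Y ∪ Set.range M) := by
    rw [hχLL]; exact hsumS 0
  have e2 : χ (L 1) (χ (L 0) (L 0)) = 0 := hχ0 _ _ (Or.inr e1)
  have e3 : χ (L 1) (L 0) ∈ Submodule.span ℂ (Set.range Y ∪ Set.range M) := by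
    rw [hχLL]; exact hsumS 1
  have e4 : χ (L 0) (χ (L 1) (L 0)) = 0 := hχ0 _ _ (Or.inr e3)
  have hzero1 : (μ.sum fun k c => c • M (1 + 0 + k)) = 0 := by
    have h := hχpost (L 1) (L 0) (L 0)
    rw [hLL] at h
    norm_num at h
    rw [e2, e4, sub_self] at h
    rw [← hχLL 1 0]
    exact h
  have hli : LinearIndependent ℂ (fun k : ℤ => M (1 + 0 + k)) := by
    have he : Function.Injective (fun k : ℤ => (((2 : Fin 3), 1 + 0 + k) : Fin 3 × ℤ)) := by
      intro a c h
      simpa using h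
    have h := b.linearIndependent.comp _ he
    have heq : (b ∘ fun k : ℤ => (((2 : Fin 3), 1 + 0 + k) : Fin 3 × ℤ))
        = fun k : ℤ => M (1 + 0 + k) := by
      funext k; simp [hbM]
    rwa [heq] at h
  have hμ0 : μ = 0 := by
    apply linearIndependent_iff.mp hli μ
    rw [Finsupp.linearCombination_apply]
    exact hzero1
  have hmu : ∀ k : ℤ, μ k = 0 := by intro k; rw [hμ0]; rfl
  -- χ = 0
  have hχz : ∀ p q : Fin 3 × ℤ, χ (b p) (b q) = 0 := by
    rintro ⟨i, n⟩ ⟨j, m⟩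
    fin_cases i <;> fin_cases j
    · show χ (b ((0 : Fin 3), n)) (b ((0 : Fin 3), m)) = 0
      rw [hbL, hbL, hχLL, hμ0, Finsupp.sum_zero_index]
    · exact hχ0 _ _ (Or.inr (hbYS m))
    · exact hχ0 _ _ (Or.inr (hbMS m))
    · exact hχ0 _ _ (Or.inl (hbYS n))
    · exact hχ0 _ _ (Or.inl (hbYS n))
    · exact hχ0 _ _ (Or.inl (hbYS n))
    · exact hχ0 _ _ (Or.inl (hbMS n))
    · exact hχ0 _ _ (Or.inl (hbMS n))
    · exact hχ0 _ _ (Or.inl (hbMS n))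
  have hχall : ∀ x y : V, χ x y = 0 := by
    have h : χ = 0 := b.ext fun p => b.ext fun q => by simpa using hχz p q
    intro x y; rw [h]; rfl
  exact ⟨hlam, hmu, fun x y => by rw [hmul, hlam, zero_smul, zero_add, hχall]⟩
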